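/- arXiv:1801.00616 — 2 statements merged into one kernel-verified Lean document; each statement's English description precedes it below -/
import Mathlib

section
/- For a mixed base β and nonnegative integers n, h, let r(n,h) = (n+h) ⊖ (n⊕h) and let r_1(n,h) be the digit of r(n,h) at position 1. Then the quotient of n+h by β_0 equals (quotient of n by β_0) + (quotient of h by β_0) + r_1(n,h). -/
open scoped BigOperators

/-- β̂_L = β_0 ⋯ β_{L-1}, the place value of digit L in mixed base β. -/
def bhat (β : ℕ → ℕ) (L : ℕ) : ℕ := ∏ i ∈ Finset.range L, β i

/-- The L-th digit of n in the mixed base β. -/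
def mdigit (β : ℕ → ℕ) (n L : ℕ) : ℕ := n / bhat β L % β L

/-- Digit-wise addition modulo β_L in mixed base β. -/
def moplus (β : ℕ → ℕ) (n h : ℕ) : ℕ :=
  ∑ L ∈ Finset.range (n + h + 1), ((mdigit β n L + mdigit β h L) % β L) * bhat β L

/-- Digit-wise subtraction modulo β_L in mixed base β. -/
def mominus (β : ℕ → ℕ) (n h : ℕ) : ℕ :=
  ∑ L ∈ Finset.range (n + h + 1), ((β L + mdigit β n L - mdigit β h L) % β L) * bhat β L

/-- σ_β(X) = x^0 ⊕ ⋯ ⊕ x^{m-1}: the digit-wise Nim sum in mixed base β. -/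
def msigma (β : ℕ → ℕ) {m : ℕ} (X : Fin m → ℕ) : ℕ :=
  ∑ L ∈ Finset.range (∑ i, X i + 1), ((∑ i, mdigit β (X i) L) % β L) * bhat β L

/-- Hamming weight: number of nonzero components. -/
def hamwt {m : ℕ} (C : Fin m → ℕ) : ℕ := (Finset.univ.filter (fun i => C i ≠ 0)).card

/-- ord_β(n): the largest L with β̂_L ∣ n (⊤ for n = 0). -/
def mord (β : ℕ → ℕ) (n : ℕ) : ℕ∞ :=
  if n = 0 then ⊤ else (Nat.findGreatest (fun L => bhat β L ∣ n) n : ℕ∞)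

/-- 𝒞 is a Sprague-Grundy system of σ_β: its members are nonzero moves and
σ_β satisfies the mex recursion of the take-away game Γ(ℕ^m, 𝒞), i.e. σ_β is the
Sprague-Grundy function of that game. -/
def IsSGSystem (β : ℕ → ℕ) {m : ℕ} (𝒞 : Set (Fin m → ℕ)) : Prop :=
  (∀ C ∈ 𝒞, C ≠ 0) ∧
  ∀ X : Fin m → ℕ, msigma β X =
    sInf {n : ℕ | ∀ C ∈ 𝒞, (∀ i, C i ≤ X i) → msigma β (fun i => X i - C i) ≠ n}

lemma bhat_pos (β : ℕ → ℕ) (hβ : ∀ L, 2 ≤ β L) (L : ℕ) : 0 < bhat β L :=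
  Finset.prod_pos fun i _ => lt_of_lt_of_le two_pos (hβ i)

lemma sum_lt_bhat (β : ℕ → ℕ) (hβ : ∀ L, 2 ≤ β L) (c : ℕ → ℕ) (hc : ∀ L, c L < β L)
    (k : ℕ) : ∑ L ∈ Finset.range k, c L * bhat β L < bhat β k := by
  induction k with
  | zero => simp [bhat]
  | succ k ih =>
    rw [Finset.sum_range_succ]
    have hb : bhat β (k + 1) = bhat β k * β k := Finset.prod_range_succ β k
    rw [hb]
    calc ∑ L ∈ Finset.range k, c L * bhat β L + c k * bhat β k
        < bhat β k + c k * bhat β k := by omega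
      _ = (c k + 1) * bhat β k := by ring
      _ ≤ β k * bhat β k := Nat.mul_le_mul_right _ (hc k)
      _ = bhat β k * β k := by ring

lemma digit_of_sum (β : ℕ → ℕ) (hβ : ∀ L, 2 ≤ β L) (c : ℕ → ℕ) (hc : ∀ L, c L < β L)
    (N k : ℕ) (hk : k < N) :
    mdigit β (∑ L ∈ Finset.range N, c L * bhat β L) k = c k := by
  have hsplit : ∑ L ∈ Finset.range N, c L * bhat β L =
      ∑ L ∈ Finset.range k, c L * bhat β L + ∑ L ∈ Finset.Ico k N, c L * bhat β L := by
    rw [Finset.range_eq_Ico, Finset.range_eq_Ico]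
    exact (Finset.sum_Ico_consecutive (fun L => c L * bhat β L) (Nat.zero_le k) hk.le).symm
  set Q : ℕ := ∑ j ∈ Finset.range (N - k), c (k + j) * ∏ i ∈ Finset.range j, β (k + i) with hQ
  have hIco : ∑ L ∈ Finset.Ico k N, c L * bhat β L = bhat β k * Q := by
    rw [Finset.sum_Ico_eq_sum_range, hQ, Finset.mul_sum]
    refine Finset.sum_congr rfl fun j _ => ?_
    rw [bhat, Finset.prod_range_add, ← bhat]
    ring
  have hQmod : Q % β k = c k := by
    obtain ⟨M, hM⟩ : ∃ M, N - k = M + 1 := ⟨N - k - 1, by omega⟩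
    rw [hQ, hM, Finset.sum_range_succ']
    simp only [Finset.prod_range_zero, Nat.add_zero, mul_one]
    have : ∀ j, c (k + (j + 1)) * ∏ i ∈ Finset.range (j + 1), β (k + i) =
        β k * (c (k + (j + 1)) * ∏ i ∈ Finset.range j, β (k + (i + 1))) := by
      intro j
      rw [Finset.prod_range_succ']
      simp only [Nat.add_zero]
      ring
    rw [Finset.sum_congr rfl fun j _ => this j, ← Finset.mul_sum,
      Nat.mul_add_mod, Nat.mod_eq_of_lt (hc k)]
  have hb := bhat_pos β hβ k
  rw [mdigit, hsplit, hIco, Nat.add_mul_div_left _ _ hb,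
    Nat.div_eq_of_lt (sum_lt_bhat β hβ c hc k), Nat.zero_add, hQmod]

lemma carry_key (m a b r : ℕ) (hm : 2 ≤ m) (hr : r ≤ 1) :
    (m + (a + b + r) % m - (a % m + b % m) % m) % m = r := by
  have hm0 : 0 < m := by omega
  rw [← Nat.add_mod]
  set s := (a + b) % m with hsdef
  have hs : s < m := Nat.mod_lt _ hm0
  have h2 : (a + b + r) % m = (s + r) % m := by
    rw [Nat.add_mod (a + b) r, ← hsdef, Nat.mod_eq_of_lt (show r < m by omega)]
  rw [h2]
  rcases Nat.le_one_iff_eq_zero_or_eq_one.mp hr with rfl | rfl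
  · have h3 : (s + 0) % m = s := by simpa using Nat.mod_eq_of_lt hs
    rw [h3, Nat.add_sub_cancel, Nat.mod_self]
  · by_cases hcase : s + 1 < m
    · rw [Nat.mod_eq_of_lt hcase, show m + (s + 1) - s = m + 1 by omega,
        Nat.add_mod_left, Nat.mod_eq_of_lt (show 1 < m by omega)]
    · have hs1 : s + 1 = m := by omega
      rw [hs1, Nat.mod_self, show m + 0 - s = 1 by omega,
        Nat.mod_eq_of_lt (show 1 < m by omega)]

/-- ⌊(n+h)/β₀⌋ = ⌊n/β₀⌋ + ⌊h/β₀⌋ + r₁(n,h). -/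
theorem stmt1 (β : ℕ → ℕ) (hβ : ∀ L, 2 ≤ β L) (n h : ℕ) :
    (n + h) / β 0 =
      n / β 0 + h / β 0 + mdigit β (mominus β (n + h) (moplus β n h)) 1 := by
  rcases Nat.eq_zero_or_pos (n + h) with h0 | hpos
  · obtain ⟨rfl, rfl⟩ : n = 0 ∧ h = 0 := by omega
    simp [moplus, mominus, mdigit, Nat.mod_self]
  · have hβ0 : 0 < β 0 := by have := hβ 0; omega
    have hβL : ∀ L, 0 < β L := fun L => by have := hβ L; omega
    have hb1 : bhat β 1 = β 0 := by simp [bhat]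
    have hc1 : ∀ L, (mdigit β n L + mdigit β h L) % β L < β L :=
      fun L => Nat.mod_lt _ (hβL L)
    have hP : mdigit β (moplus β n h) 1 = (mdigit β n 1 + mdigit β h 1) % β 1 := by
      rw [moplus]; exact digit_of_sum β hβ _ hc1 _ 1 (by omega)
    set P := moplus β n h with hPdef
    have hc2 : ∀ L, (β L + mdigit β (n + h) L - mdigit β P L) % β L < β L :=
      fun L => Nat.mod_lt _ (hβL L)
    have hR : mdigit β (mominus β (n + h) P) 1 =
        (β 1 + mdigit β (n + h) 1 - mdigit β P 1) % β 1 := by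
      rw [mominus]; exact digit_of_sum β hβ _ hc2 _ 1 (by omega)
    rw [hR, hP]
    have hd : ∀ x, mdigit β x 1 = x / β 0 % β 1 := fun x => by rw [mdigit, hb1]
    simp only [hd]
    rw [Nat.add_div hβ0]
    set r : ℕ := if β 0 ≤ n % β 0 + h % β 0 then 1 else 0 with hrdef
    have hr : r ≤ 1 := by rw [hrdef]; split <;> omega
    rw [carry_key (β 1) (n / β 0) (h / β 0) r (hβ 1) hr]
end

section
/- Let β = (β_0, 2, 2, 2, ...) be a mixed base with β_1 = β_2 = ... = 2. Then the set 𝒞 = {C ∈ ℕ^m : wt(C) = 1} ∪ {C ∈ ℕ^m : 1 ≤ Σ_i c^i ≤ β_0 - 1} is contained in every Sprague-Grundy system of σ_{β,m}; i.e., 𝒞 is the minimum Sprague-Grundy system of σ_β. -/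
open scoped BigOperators

section Aux
variable (β : ℕ → ℕ)

lemma bhat_succ (L : ℕ) : bhat β (L + 1) = bhat β L * β L := by
  simp [bhat, Finset.prod_range_succ]

lemma two_pow_le_bhat (h2 : ∀ L, 2 ≤ β L) (k : ℕ) : 2 ^ k ≤ bhat β k := by
  induction k with
  | zero => simp [bhat]
  | succ k ih =>
    rw [bhat_succ, pow_succ]
    exact Nat.mul_le_mul ih (h2 k)

lemma digit_sum (n k : ℕ) :
    ∑ L ∈ Finset.range k, mdigit β n L * bhat β L = n % bhat β k := by
  induction k with
  | zero => simp [bhat, Nat.mod_one]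
  | succ k ih =>
    rw [Finset.sum_range_succ, ih, bhat_succ, Nat.mod_mul, mdigit]
    ring

lemma reconstruct (h2 : ∀ L, 2 ≤ β L) (n : ℕ) :
    ∑ L ∈ Finset.range (n + 1), mdigit β n L * bhat β L = n := by
  rw [digit_sum]
  exact Nat.mod_eq_of_lt (lt_of_lt_of_le (Nat.lt_two_pow_self (n := n) |>.trans_le
    (Nat.pow_le_pow_right (by norm_num) (Nat.le_succ n))) (two_pow_le_bhat β h2 (n + 1)))

lemma mdigit_zero (L : ℕ) : mdigit β 0 L = 0 := by simp [mdigit]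

/-- σ of a vector supported on one coordinate. -/
lemma msigma_single (h2 : ∀ L, 2 ≤ β L) {m : ℕ} (X : Fin m → ℕ) (j : Fin m)
    (hX : ∀ i, i ≠ j → X i = 0) : msigma β X = X j := by
  have hsum : ∑ i, X i = X j :=
    Finset.sum_eq_single j (fun i _ hi => hX i hi) (by simp)
  have hd : ∀ L, ∑ i, mdigit β (X i) L = mdigit β (X j) L := fun L =>
    Finset.sum_eq_single j (fun i _ hi => by rw [hX i hi, mdigit_zero]) (by simp)
  have : ∀ L, (∑ i, mdigit β (X i) L) % β L = mdigit β (X j) L := fun L => by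
    rw [hd L, mdigit, Nat.mod_mod_of_dvd _ dvd_rfl]
  unfold msigma
  rw [hsum]
  simp_rw [this]
  exact reconstruct β h2 (X j)

lemma bhat_ge_beta0 (h2 : ∀ L, 2 ≤ β L) {L : ℕ} (hL : 1 ≤ L) : β 0 ≤ bhat β L := by
  calc β 0 = bhat β 1 := by simp [bhat]
  _ ≤ bhat β L := by
      unfold bhat
      exact Finset.prod_le_prod_of_subset_of_one_le'
        (Finset.range_subset_range.2 hL)
        (fun i _ _ => le_trans (by norm_num) (h2 i))

/-- σ of a vector with small total sum. -/
lemma msigma_small (h2 : ∀ L, 2 ≤ β L) {m : ℕ} (X : Fin m → ℕ)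
    (hs : ∑ i, X i < β 0) : msigma β X = ∑ i, X i := by
  unfold msigma
  rw [Finset.sum_eq_single_of_mem 0 (Finset.mem_range.2 (Nat.succ_pos _))]
  · have : ∀ i : Fin m, mdigit β (X i) 0 = X i := fun i => by
      have hxi : X i ≤ ∑ k, X k := Finset.single_le_sum (fun _ _ => Nat.zero_le _) (by simp)
      simp [mdigit, bhat, Nat.mod_eq_of_lt (lt_of_le_of_lt hxi hs)]
    simp_rw [this]
    simp [bhat, Nat.mod_eq_of_lt hs]
  · intro L _ hL
    have hL1 : 1 ≤ L := Nat.one_le_iff_ne_zero.2 hL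
    have : ∀ i : Fin m, mdigit β (X i) L = 0 := fun i => by
      have hxi : X i ≤ ∑ k, X k := Finset.single_le_sum (fun _ _ => Nat.zero_le _) (by simp)
      have : X i < bhat β L := lt_of_lt_of_le (lt_of_le_of_lt hxi hs) (bhat_ge_beta0 β h2 hL1)
      simp [mdigit, Nat.div_eq_of_lt this]
    simp [this]

end Aux

/-- For β = (β₀, 2, 2, …), the set of weight-one moves together with moves of
total size < β₀ is contained in every Sprague-Grundy system of σ_β. -/
theorem stmt7 (β : ℕ → ℕ) (hβ0 : 2 ≤ β 0) (hβ : ∀ L, 1 ≤ L → β L = 2)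
    {m : ℕ} (𝒟 : Set (Fin m → ℕ)) (h𝒟 : IsSGSystem β 𝒟) :
    ({C : Fin m → ℕ | hamwt C = 1} ∪
      {C : Fin m → ℕ | 1 ≤ ∑ i, C i ∧ ∑ i, C i ≤ β 0 - 1}) ⊆ 𝒟 := by
  have h2 : ∀ L, 2 ≤ β L := fun L => by
    rcases Nat.eq_zero_or_pos L with h | h
    · subst h; exact hβ0
    · rw [hβ L h]
  intro C hC
  -- common step: 0 must be reachable from C by some move in 𝒟
  have key : msigma β C ≠ 0 →
      ∃ D ∈ 𝒟, (∀ i, D i ≤ C i) ∧ msigma β (fun i => C i - D i) = 0 := by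
    intro hne
    by_contra h
    push_neg at h
    have h0 : (0 : ℕ) ∈ {n : ℕ | ∀ D ∈ 𝒟, (∀ i, D i ≤ C i) →
        msigma β (fun i => C i - D i) ≠ n} := fun D hD hle => h D hD hle
    have := h𝒟.2 C
    have : msigma β C = 0 := le_antisymm (this ▸ Nat.sInf_le h0) (Nat.zero_le _)
    exact hne this
  rcases hC with hC | hC
  · -- weight-one case
    obtain ⟨j, hj⟩ := Finset.card_eq_one.mp hC
    have hCj : C j ≠ 0 := by
      have : j ∈ Finset.univ.filter (fun i => C i ≠ 0) := hj ▸ Finset.mem_singleton_self j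
      exact (Finset.mem_filter.mp this).2
    have hCi : ∀ i, i ≠ j → C i = 0 := fun i hi => by
      by_contra hne
      have : i ∈ Finset.univ.filter (fun k => C k ≠ 0) := Finset.mem_filter.mpr ⟨by simp, hne⟩
      exact hi (Finset.mem_singleton.mp (hj ▸ this))
    have hσC : msigma β C = C j := msigma_single β h2 C j hCi
    obtain ⟨D, hD𝒟, hDle, hD0⟩ := key (by rw [hσC]; exact hCj)
    have hDi : ∀ i, i ≠ j → C i - D i = 0 := fun i hi => by
      rw [hCi i hi]; simp
    have := msigma_single β h2 (fun i => C i - D i) j hDi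
    rw [hD0] at this
    have hDC : D = C := by
      funext i
      rcases eq_or_ne i j with rfl | hi
      · exact le_antisymm (hDle i) (Nat.sub_eq_zero_iff_le.mp this.symm)
      · rw [hCi i hi]; exact Nat.le_zero.mp ((hCi i hi) ▸ hDle i)
    exact hDC ▸ hD𝒟
  · -- small-sum case
    obtain ⟨h1, hle⟩ := hC
    have hlt : ∑ i, C i < β 0 := lt_of_le_of_lt hle (Nat.sub_lt (by omega) one_pos)
    have hσC : msigma β C = ∑ i, C i := msigma_small β h2 C hlt
    obtain ⟨D, hD𝒟, hDle, hD0⟩ := key (by omega)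
    have hYlt : ∑ i, (C i - D i) < β 0 :=
      lt_of_le_of_lt (Finset.sum_le_sum fun i _ => Nat.sub_le _ _) hlt
    have := msigma_small β h2 (fun i => C i - D i) hYlt
    rw [hD0] at this
    have hDC : D = C := by
      funext i
      have : C i - D i = 0 := by
        have := (Finset.sum_eq_zero_iff.mp this.symm) i (by simp)
        exact this
      exact le_antisymm (hDle i) (Nat.sub_eq_zero_iff_le.mp this)
    exact hDC ▸ hD𝒟
end
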